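/- Let H, K be closed subspaces of L², C_K an antilinear unitary on K, F : H → K a bounded invertible operator, E = F*, and define C_H = F⁻¹ ∘ C_K ∘ F. Then the following are equivalent: (a) C_H is an antilinear unitary on H; (b) C_K ∘ (F E) = (F E) ∘ C_K; (c) C_H = E ∘ C_K ∘ E⁻¹. -/

import Mathlib

open MeasureTheory

noncomputable section

/-! ## Setup: the circle, L², L∞, multiplication operators, Hardy space,
model spaces, and generalized Toeplitz operators -/

instance : Fact (0 < 2 * Real.pi) := ⟨by positivity⟩

/-- The normalized Lebesgue (Haar) measure `dθ/2π` on the circle. -/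
abbrev μH : Measure (AddCircle (2 * Real.pi)) := AddCircle.haarAddCircle

/-- The Lebesgue space `L²` of the circle. -/
abbrev L2 : Type := Lp ℂ 2 μH

/-- The space `L∞` of essentially bounded functions on the circle. -/
abbrev Linf : Type := Lp ℂ ⊤ μH

/-- Pointwise (a.e.) multiplication on `L∞`. -/
instance : Mul Linf :=
  ⟨fun f g => ((Lp.memLp g).smul (r := ⊤) (Lp.memLp f)).toLp (⇑f • ⇑g)⟩

/-- The constant function `1` as an element of `L∞`. -/
instance : One Linf := ⟨(memLp_const (1 : ℂ)).toLp (fun _ => (1 : ℂ))⟩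

/-- Complex conjugation on `L∞`. -/
instance : Star Linf :=
  ⟨fun f => ((Complex.conjCLE.toContinuousLinearMap).comp_memLp' (Lp.memLp f)).toLp
    ((starRingEnd ℂ) ∘ ⇑f)⟩

/-- Multiplication of an `L²` function by an `L∞` function. -/
def mulFun (φ : Linf) (f : L2) : L2 :=
  ((Lp.memLp f).smul (r := 2) (Lp.memLp φ)).toLp (⇑φ • ⇑f)

lemma mulFun_coe (φ : Linf) (f : L2) : mulFun φ f =ᵐ[μH] ⇑φ • ⇑f :=
  MemLp.coeFn_toLp _

lemma mulFun_norm_le (φ : Linf) (f : L2) : ‖mulFun φ f‖ ≤ ‖φ‖ * ‖f‖ := by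
  rw [mulFun, Lp.norm_toLp, Lp.norm_def, Lp.norm_def, ← ENNReal.toReal_mul]
  refine ENNReal.toReal_mono ?_ ?_
  · exact ENNReal.mul_ne_top (Lp.eLpNorm_ne_top φ) (Lp.eLpNorm_ne_top f)
  · exact eLpNorm_smul_le_eLpNorm_top_mul_eLpNorm 2 (Lp.aestronglyMeasurable f) ⇑φ

/-- The bounded multiplication operator `M_φ : L² → L²` for `φ ∈ L∞`. -/
def mulCLM (φ : Linf) : L2 →L[ℂ] L2 :=
  LinearMap.mkContinuous
    { toFun := mulFun φ
      map_add' := by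
        intro f g
        apply Lp.ext
        filter_upwards [mulFun_coe φ (f + g), mulFun_coe φ f, mulFun_coe φ g,
          Lp.coeFn_add f g, Lp.coeFn_add (mulFun φ f) (mulFun φ g)] with x h1 h2 h3 h4 h5
        simp only [Pi.smul_apply', Pi.add_apply] at *
        rw [h1, h5, h2, h3, h4]
        exact smul_add _ _ _
      map_smul' := by
        intro c f
        apply Lp.ext
        filter_upwards [mulFun_coe φ (c • f), mulFun_coe φ f,
          Lp.coeFn_smul c f, Lp.coeFn_smul c (mulFun φ f)] with x h1 h2 h3 h4
        simp only [Pi.smul_apply', Pi.smul_apply, RingHom.id_apply] at *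
        rw [h1, h4, h2, h3]
        exact smul_comm _ _ _ }
    ‖φ‖ (mulFun_norm_le φ)

/-- The image `a·K = {a f : f ∈ K}` of a subspace `K ⊆ L²` under multiplication by `a ∈ L∞`. -/
def smulSub (a : Linf) (K : Submodule ℂ L2) : Submodule ℂ L2 :=
  K.map (mulCLM a : L2 →ₗ[ℂ] L2)

/-- The Hardy space `H² = {f ∈ L² : f̂(n) = 0 for n < 0}`. -/
def Hardy : Submodule ℂ L2 where
  carrier := {f | ∀ n : ℤ, n < 0 → fourierBasis.repr f n = 0}
  add_mem' := by
    intro f g hf hg n hn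
    rw [map_add, lp.coeFn_add, Pi.add_apply, hf n hn, hg n hn, add_zero]
  zero_mem' := by
    intro n hn
    rw [map_zero, lp.coeFn_zero]
    rfl
  smul_mem' := by
    intro c f hf n hn
    rw [_root_.map_smul, lp.coeFn_smul, Pi.smul_apply, hf n hn, smul_zero]

lemma hardy_isClosed : IsClosed (Hardy : Set L2) := by
  have h : (Hardy : Set L2) =
      ⋂ n : {m : ℤ // m < 0}, {f : L2 | fourierBasis.repr f n.1 = 0} := by
    ext f
    constructor
    · intro hf
      exact Set.mem_iInter.2 fun n => hf n.1 n.2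
    · intro hf n hn
      exact Set.mem_iInter.1 hf ⟨n, hn⟩
  rw [h]
  refine isClosed_iInter fun n => isClosed_eq ?_ continuous_const
  have : (fun f : L2 => fourierBasis.repr f n.1) =
      fun f : L2 => (innerSL ℂ (fourierBasis n.1)) f := by
    funext f
    exact fourierBasis.repr_apply_apply f n.1
  rw [this]
  exact (innerSL ℂ (fourierBasis n.1)).continuous

instance : CompleteSpace Hardy := hardy_isClosed.completeSpace_coe

/-- The model space `K_θ = H² ⊖ θH² = H² ∩ (θH²)^⊥`. -/
def modelSpace (θ : Linf) : Submodule ℂ L2 :=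
  Hardy ⊓ (smulSub θ Hardy)ᗮ

instance (θ : Linf) : CompleteSpace (modelSpace θ) := by
  refine IsClosed.completeSpace_coe (hs := ?_)
  have h : (modelSpace θ : Set L2) = (Hardy : Set L2) ∩ ((smulSub θ Hardy)ᗮ : Set L2) := rfl
  rw [h]
  exact hardy_isClosed.inter (smulSub θ Hardy).isClosed_orthogonal

/-- The generalized Toeplitz operator `T_φ^{H₁,H₂} = P_{H₂} M_φ |_{H₁}`. -/
def genToeplitz (φ : Linf) (H₁ H₂ : Submodule ℂ L2) [CompleteSpace H₂] : H₁ →L[ℂ] H₂ :=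
  (Submodule.orthogonalProjectionOnto H₂).comp ((mulCLM φ).comp H₁.subtypeL)

/-- The orthogonal projection of `L²` onto `H`, viewed as an operator `L² → L²`. -/
def projL (H : Submodule ℂ L2) [CompleteSpace H] : L2 →L[ℂ] L2 :=
  H.subtypeL.comp (Submodule.orthogonalProjectionOnto H)

/-- `φ ∈ H∞`: all negative Fourier coefficients of `φ` vanish. -/
def IsHardyInf (φ : Linf) : Prop := ∀ n : ℤ, n < 0 → fourierCoeff (⇑φ) n = 0

/-- `θ` is an inner function: `θ ∈ H∞` and `|θ| = 1` a.e. on the circle. -/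
def IsInner (θ : Linf) : Prop :=
  IsHardyInf θ ∧ ∀ᵐ x ∂μH, ‖(θ : AddCircle (2 * Real.pi) → ℂ) x‖ = 1

/-- `a ∈ 𝒢H∞` with explicit inverse `b ∈ H∞`. -/
def GHinfPair (a b : Linf) : Prop := IsHardyInf a ∧ IsHardyInf b ∧ a * b = 1

/-- `a ∈ 𝒢H∞`: `a` is invertible in the algebra `H∞`. -/
def IsGHinf (a : Linf) : Prop := ∃ b, GHinfPair a b

/-- `b ∈ 𝒢H̄∞`: `b` is the conjugate of an element of `𝒢H∞`. -/
def IsGHinfBar (b : Linf) : Prop := ∃ c, IsGHinf c ∧ b = star c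

/-- `a ∈ 𝒢L∞` with explicit inverse `b`. -/
def GLinfPair (a b : Linf) : Prop := a * b = 1 ∧ b * a = 1

/-- `a ∈ 𝒢L∞`: `a` is invertible in the algebra `L∞`. -/
def IsGLinf (a : Linf) : Prop := ∃ b, GLinfPair a b

/-- The kernel of an operator between subspaces of `L²`, viewed as a subspace of `L²`. -/
def subKer {K₁ K₂ : Submodule ℂ L2} (T : K₁ →L[ℂ] K₂) : Submodule ℂ L2 :=
  (LinearMap.ker (T : K₁ →ₗ[ℂ] K₂)).map K₁.subtype

/-- The range of an operator between subspaces of `L²`, viewed as a subspace of `L²`. -/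
def subRan {K₁ K₂ : Submodule ℂ L2} (T : K₁ →L[ℂ] K₂) : Submodule ℂ L2 :=
  (LinearMap.range (T : K₁ →ₗ[ℂ] K₂)).map K₂.subtype

/-- The image of a subspace `S ⊆ K₁` under `T : K₁ → K₂`, viewed as a subspace of `L²`. -/
def opImage {K₁ K₂ : Submodule ℂ L2} (T : K₁ →L[ℂ] K₂) (S : Submodule ℂ K₁) :
    Submodule ℂ L2 :=
  (S.map (T : K₁ →ₗ[ℂ] K₂)).map K₂.subtype

section Antilinear

variable {E : Type*} [NormedAddCommGroup E] [InnerProductSpace ℂ E]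

/-- `C` is antilinear: `C(f + a g) = C f + ā C g`. -/
def IsAntilinearMap (C : E → E) : Prop :=
  ∀ (f g : E) (a : ℂ), C (f + a • g) = C f + (starRingEnd ℂ a) • C g

/-- `Cs` is the antilinear adjoint of `C`: `⟨C f, g⟩ = conj ⟨f, Cs g⟩`. -/
def IsAntilinearAdjointOf (C Cs : E → E) : Prop :=
  ∀ f g : E, (inner ℂ (C f) g : ℂ) = (starRingEnd ℂ) (inner ℂ f (Cs g) : ℂ)

/-- `C` is an antilinear unitary: it is antilinear and its antilinear adjoint is its inverse. -/
def IsAntilinearUnitary (C : E → E) : Prop :=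
  IsAntilinearMap C ∧ ∃ Cs : E → E, IsAntilinearAdjointOf C Cs ∧
    Function.LeftInverse Cs C ∧ Function.RightInverse Cs C

/-- `T` is complex selfadjoint with respect to `C` (with inverse `Cinv`): `C T C⁻¹ = T*`. -/
def IsComplexSelfadjointWith [CompleteSpace E] (T : E →L[ℂ] E) (C Cinv : E → E) : Prop :=
  ∀ f : E, C (T (Cinv f)) = ContinuousLinearMap.adjoint T f

end Antilinear

set_option maxHeartbeats 1000000 in
/-- Proposition 4.2: for an antilinear unitary `C_K` on `K`, an
invertible `F : H → K` with `E = F*`, and `C_H = F⁻¹ C_K F`, TFAE: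
(a) `C_H` is an antilinear unitary on `H`; (b) `C_K (FE) = (FE) C_K`;
(c) `C_H = E C_K E⁻¹`. -/
theorem statement15 (H K : Submodule ℂ L2) [CompleteSpace H] [CompleteSpace K]
    (CK : K → K) (hCK : IsAntilinearUnitary CK)
    (F : H →L[ℂ] K) (Finv : K →L[ℂ] H)
    (hF1 : Finv.comp F = ContinuousLinearMap.id ℂ H)
    (hF2 : F.comp Finv = ContinuousLinearMap.id ℂ K) :
    (IsAntilinearUnitary (fun f : H => Finv (CK (F f))) ↔
      ∀ f : K, CK (F (ContinuousLinearMap.adjoint F f)) =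
        F (ContinuousLinearMap.adjoint F (CK f))) ∧
    (IsAntilinearUnitary (fun f : H => Finv (CK (F f))) ↔
      ∀ f : H, Finv (CK (F f)) =
        ContinuousLinearMap.adjoint F (CK (ContinuousLinearMap.adjoint Finv f))) := by
  classical
  obtain ⟨hAnt, CKs, hAdj, hL, hR⟩ := hCK
  set E : K →L[ℂ] H := ContinuousLinearMap.adjoint F with hE
  set Ei : H →L[ℂ] K := ContinuousLinearMap.adjoint Finv with hEi
  have hFiF : ∀ x : H, Finv (F x) = x := fun x => by
    have := DFunLike.congr_fun hF1 x
    simpa using this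
  have hFFi : ∀ x : K, F (Finv x) = x := fun x => by
    have := DFunLike.congr_fun hF2 x
    simpa using this
  have hadj1 : E.comp Ei = ContinuousLinearMap.id ℂ H := by
    have := congrArg ContinuousLinearMap.adjoint hF1
    rwa [ContinuousLinearMap.adjoint_comp, ContinuousLinearMap.adjoint_id] at this
  have hadj2 : Ei.comp E = ContinuousLinearMap.id ℂ K := by
    have := congrArg ContinuousLinearMap.adjoint hF2
    rwa [ContinuousLinearMap.adjoint_comp, ContinuousLinearMap.adjoint_id] at this
  have hEEi : ∀ x : H, E (Ei x) = x := fun x => by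
    have := DFunLike.congr_fun hadj1 x
    simpa using this
  have hEiE : ∀ x : K, Ei (E x) = x := fun x => by
    have := DFunLike.congr_fun hadj2 x
    simpa using this
  set CH : H → H := fun f : H => Finv (CK (F f)) with hCH
  set D : H → H := fun f : H => E (CKs (Ei f)) with hD
  -- CH is antilinear
  have hCHant : IsAntilinearMap CH := by
    intro f g a
    simp only [hCH]
    rw [map_add, F.map_smul, hAnt, map_add, Finv.map_smul]
  -- D is an antilinear adjoint of CH
  have hDadj : IsAntilinearAdjointOf CH D := by
    intro f g
    have h1 : (inner ℂ (Finv (CK (F f))) g : ℂ) = inner ℂ (CK (F f)) (Ei g) :=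
      (ContinuousLinearMap.adjoint_inner_right Finv _ _).symm
    have h2 : (inner ℂ (F f) (CKs (Ei g)) : ℂ) = inner ℂ f (E (CKs (Ei g))) := by
      rw [hE, ContinuousLinearMap.adjoint_inner_right]
    simp only [hCH, hD]
    rw [h1, hAdj, h2]
  -- adjoint uniqueness
  have hUniq : ∀ Cs' : H → H, IsAntilinearAdjointOf CH Cs' → ∀ g, Cs' g = D g := by
    intro Cs' hadj' g
    refine ext_inner_left ℂ fun v => ?_
    have h1 := hadj' v g
    have h2 := hDadj v g
    have := h1.symm.trans h2
    exact (starRingEnd ℂ).injective this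
  -- statement (c) as a proposition
  have hac : IsAntilinearUnitary CH ↔ ∀ f : H, CH f = E (CK (Ei f)) := by
    constructor
    · rintro ⟨-, Cs, hadj', hL', hR'⟩
      have hCs : ∀ g, Cs g = D g := hUniq Cs hadj'
      intro f
      have key : D (E (CK (Ei f))) = f := by
        simp only [hD]
        rw [hEiE, hL, hEEi]
      calc CH f = CH (D (E (CK (Ei f)))) := by rw [key]
        _ = CH (Cs (E (CK (Ei f)))) := by rw [hCs]
        _ = E (CK (Ei f)) := hR' _
    · intro hc
      refine ⟨hCHant, D, hDadj, ?_, ?_⟩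
      · intro f
        simp only [hD]
        rw [show CH f = E (CK (Ei f)) from hc f, hEiE, hL, hEEi]
      · intro f
        rw [show CH (D f) = E (CK (Ei (D f))) from hc _]
        simp only [hD]
        rw [hEiE, hR, hEEi]
  -- (b) ↔ (c)
  have hbc : (∀ f : K, CK (F (E f)) = F (E (CK f))) ↔ (∀ f : H, CH f = E (CK (Ei f))) := by
    constructor
    · intro h f
      have h1 := h (Ei f)
      rw [hEEi] at h1
      simp only [hCH]
      rw [h1, hFiF]
    · intro h f
      have h1 := h (E f)
      simp only [hCH] at h1
      rw [hEiE] at h1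
      have := congrArg F h1
      rwa [hFFi] at this
  exact ⟨hac.trans hbc.symm, hac⟩
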